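/- Let R be a kind subring of ℂ that is closed under complex conjugation and contains 1, and equip the Laurent polynomial ring R[x, x⁻¹] with the involution determined by (Σᵢ aᵢ xⁱ)* = Σᵢ conj(aᵢ) x⁻ⁱ. If p ∈ R[x, x⁻¹] satisfies p* = p and p² = p, then p = 0 or p = 1. -/

import Mathlib

/-- A subring `R` of `ℂ` is *kind* if whenever `λ₀, λ₁, …, λₙ ∈ R` satisfy
`λ₀ = ∑ᵢ₌₀ⁿ |λᵢ|²`, then `λ₁ = ⋯ = λₙ = 0`. -/
def IsKind (R : Subring ℂ) : Prop :=
  ∀ (n : ℕ) (l : Fin (n + 1) → ℂ), (∀ i, l i ∈ R) →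
    l 0 = ∑ i, l i * (starRingEnd ℂ) (l i) →
    ∀ i, i ≠ 0 → l i = 0

/-- a self-adjoint idempotent in the Laurent polynomial ring `R[x,x⁻¹]`
over a kind subring `R` of `ℂ`, with involution `(∑ aᵢ xⁱ)* = ∑ conj(aᵢ) x⁻ⁱ`, is `0`
or `1`. Here `c` is the restriction of complex conjugation to `R`, and self-adjointness
`p* = p` is expressed coefficientwise: `c(a₋ᵢ) = aᵢ` for all `i`. -/
theorem laurent_projection_trivial (R : Subring ℂ)
    (hconj : ∀ z ∈ R, (starRingEnd ℂ) z ∈ R) (hkind : IsKind R)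
    (c : R →+* R) (hc : ∀ x : R, (c x : ℂ) = (starRingEnd ℂ) (x : ℂ))
    (p : LaurentPolynomial R)
    (hsa : ∀ i : ℤ, c (p.coeff (-i)) = p.coeff i)
    (hidem : p * p = p) :
    p = 0 ∨ p = 1 := by
  classical
  have hconja : ∀ i : ℤ, ((p.coeff (-i) : R) : ℂ) = (starRingEnd ℂ) ((p.coeff i : R) : ℂ) := by
    intro i
    have h1 : (starRingEnd ℂ) ((p.coeff (-i) : R) : ℂ) = ((p.coeff i : R) : ℂ) := by
      rw [← hc]; exact congrArg (fun x : R => (x : ℂ)) (hsa i)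
    have h2 := congrArg (starRingEnd ℂ) h1
    rwa [Complex.conj_conj] at h2
  -- coefficient of x^0 in p*p
  have hmul : (p * p).coeff 0 = ∑ i ∈ p.coeff.support, p.coeff i * p.coeff (-i) := by
    rw [AddMonoidAlgebra.coeff_mul, Finsupp.sum]
    refine Finset.sum_congr rfl fun i _ => ?_
    rw [Finsupp.sum]
    rw [Finset.sum_eq_single (-i)]
    · rw [if_pos (by ring)]
    · intro b _ hb
      rw [if_neg (fun h => hb (by omega))]
    · intro h
      rw [Finsupp.notMem_support_iff.mp h, mul_zero, if_pos (by ring)]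
  have hkey : ((p.coeff 0 : R) : ℂ) = ∑ i ∈ p.coeff.support, ((p.coeff i : R) : ℂ) * (starRingEnd ℂ) ((p.coeff i : R) : ℂ) := by
    have h2 : p.coeff 0 = ∑ i ∈ p.coeff.support, p.coeff i * p.coeff (-i) := by rw [← hmul, hidem]
    have h3 := congrArg (fun x : R => (x : ℂ)) h2
    push_cast at h3
    rw [h3]
    exact Finset.sum_congr rfl fun i _ => by rw [hconja]
  set t : Finset ℤ := p.coeff.support.erase 0 with ht
  set f : ℤ → ℂ := fun i => ((p.coeff i : R) : ℂ) * (starRingEnd ℂ) ((p.coeff i : R) : ℂ) with hf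
  have hsplit : (∑ i ∈ p.coeff.support, f i) = f 0 + ∑ i ∈ t, f i := by
    by_cases h0 : (0 : ℤ) ∈ p.coeff.support
    · exact (Finset.add_sum_erase _ _ h0).symm
    · have hz : p.coeff 0 = 0 := Finsupp.notMem_support_iff.mp h0
      have hf0 : f 0 = 0 := by rw [hf]; simp [hz]
      rw [ht, Finset.erase_eq_of_notMem h0, hf0, zero_add]
  have hkey2 : ((p.coeff 0 : R) : ℂ) = ((p.coeff 0 : R) : ℂ) * (starRingEnd ℂ) ((p.coeff 0 : R) : ℂ)
      + ∑ i ∈ t, ((p.coeff i : R) : ℂ) * (starRingEnd ℂ) ((p.coeff i : R) : ℂ) :=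
    hkey.trans hsplit
  -- apply kindness
  set n : ℕ := t.card with hn
  let e : {x // x ∈ t} ≃ Fin n := t.equivFin
  set l : Fin (n + 1) → ℂ := fun i =>
    Fin.cases ((p.coeff 0 : R) : ℂ) (fun j => ((p.coeff (e.symm j : ℤ) : R) : ℂ)) i with hl
  have hmem : ∀ i, l i ∈ R := by
    intro i
    induction i using Fin.cases with
    | zero => simpa [hl] using (p.coeff 0).2
    | succ j => simpa [hl] using (p.coeff ((e.symm j : ℤ))).2
  have hsum : l 0 = ∑ i, l i * (starRingEnd ℂ) (l i) := by
    rw [Fin.sum_univ_succ]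
    simp only [hl, Fin.cases_zero, Fin.cases_succ]
    have hre : (∑ j : Fin n, ((p.coeff (e.symm j : ℤ) : R) : ℂ)
          * (starRingEnd ℂ) ((p.coeff (e.symm j : ℤ) : R) : ℂ))
        = ∑ i ∈ t, ((p.coeff i : R) : ℂ) * (starRingEnd ℂ) ((p.coeff i : R) : ℂ) := by
      rw [Equiv.sum_comp e.symm
        (fun x : {x // x ∈ t} => ((p.coeff (x : ℤ) : R) : ℂ) * (starRingEnd ℂ) ((p.coeff (x : ℤ) : R) : ℂ))]
      exact Finset.sum_coe_sort t
        (fun i => ((p.coeff i : R) : ℂ) * (starRingEnd ℂ) ((p.coeff i : R) : ℂ))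
    rw [hre]
    exact hkey2
  have hzero := hkind n l hmem hsum
  have ht_empty : t = ∅ := by
    by_contra hne
    obtain ⟨x, hx⟩ := Finset.nonempty_iff_ne_empty.mpr hne
    have hax : ((p.coeff x : R) : ℂ) = 0 := by
      have h7 := hzero (e ⟨x, hx⟩).succ (Fin.succ_ne_zero _)
      simpa [hl, Fin.cases_succ] using h7
    have hne' : p.coeff x ≠ 0 := Finsupp.mem_support_iff.mp (Finset.mem_of_mem_erase hx)
    exact hne' (Subtype.ext (by simpa using hax))
  have hsupp : p.coeff.support ⊆ {0} := by
    intro x hx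
    simp only [Finset.mem_singleton]
    by_contra h
    have hxt : x ∈ t := Finset.mem_erase.mpr ⟨h, hx⟩
    rw [ht_empty] at hxt
    exact absurd hxt (Finset.notMem_empty x)
  have hp : p = AddMonoidAlgebra.single 0 (p.coeff 0) :=
    AddMonoidAlgebra.coeff_inj.mp (by rw [AddMonoidAlgebra.coeff_single]; exact Finsupp.support_subset_singleton.mp hsupp)
  have hcoeff : p.coeff 0 * p.coeff 0 = p.coeff 0 := by
    have h2 : (∑ i ∈ p.coeff.support, p.coeff i * p.coeff (-i)) = p.coeff 0 := by rw [← hmul, hidem]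
    rw [Finset.sum_subset hsupp
      (fun x _ hx => by rw [Finsupp.notMem_support_iff.mp hx, zero_mul])] at h2
    rw [Finset.sum_singleton, neg_zero] at h2
    exact h2
  have hc2 : ((p.coeff 0 : R) : ℂ) = 0 ∨ ((p.coeff 0 : R) : ℂ) = 1 := by
    have h5 : ((p.coeff 0 : R) : ℂ) * ((p.coeff 0 : R) : ℂ) = ((p.coeff 0 : R) : ℂ) := by
      have h6 := congrArg (fun x : R => (x : ℂ)) hcoeff
      push_cast at h6; exact h6
    have h6 : ((p.coeff 0 : R) : ℂ) * (((p.coeff 0 : R) : ℂ) - 1) = 0 := by ring_nf; linear_combination h5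
    rcases mul_eq_zero.mp h6 with h | h
    · exact Or.inl h
    · exact Or.inr (sub_eq_zero.mp h)
  rcases hc2 with h | h
  · left
    rw [hp]
    have h8 : p.coeff 0 = 0 := Subtype.ext (by simpa using h)
    rw [h8, AddMonoidAlgebra.single_zero]
  · right
    rw [hp]
    have h8 : p.coeff 0 = 1 := Subtype.ext (by simpa using h)
    rw [h8]
    exact (AddMonoidAlgebra.one_def).symm
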